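/- For k=2 and |q|<1, (q;q)_∞ · ∑_{i=0}^∞ q^i/(q;q)_i³ = ∑_{i_1=0}^∞ ∑_{i_2=0}^∞ q^{i_1+i_1²+i_2+i_2²+i_1 i_2} / ((q;q)_{i_1} (q;q)_{i_2} (q;q)_{i_1} (q;q)_{i_1+i_2}) where the denominator is (q;q)_{i_1}·(q;q)_{i_2}·(q;q)_{i_1}·(q;q)_{i_1+i_2}. -/

import Mathlib

noncomputable def qPoch (q : ℝ) (n : ℕ) : ℝ := ∏ j ∈ Finset.range n, (1 - q ^ (j + 1))

namespace PretzelAux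

open Finset Filter

lemma one_sub_pow_pos {q : ℝ} (hq : |q| < 1) (k : ℕ) (hk : k ≠ 0) : 0 < 1 - q ^ k := by
  have h1 : |q ^ k| < 1 := by
    rw [abs_pow]
    exact pow_lt_one₀ (abs_nonneg q) hq hk
  have := (abs_lt.mp h1).2
  linarith

lemma qPoch_pos {q : ℝ} (hq : |q| < 1) (n : ℕ) : 0 < qPoch q n :=
  Finset.prod_pos fun j _ => one_sub_pow_pos hq (j + 1) (Nat.succ_ne_zero j)

lemma qPoch_ne {q : ℝ} (hq : |q| < 1) (n : ℕ) : qPoch q n ≠ 0 :=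
  ne_of_gt (qPoch_pos hq n)

lemma qPoch_succ (q : ℝ) (n : ℕ) : qPoch q (n + 1) = qPoch q n * (1 - q ^ (n + 1)) :=
  Finset.prod_range_succ _ _

/-- The finite Durfee-rectangle sum. -/
noncomputable def S (q : ℝ) (m r : ℕ) : ℝ :=
  ∑ a ∈ Finset.range (m + 1), q ^ (a * (a + r)) / (qPoch q a * qPoch q (a + r) * qPoch q (m - a))

lemma S_eq {q : ℝ} (hq : |q| < 1) : ∀ m r : ℕ, S q m r = 1 / (qPoch q m * qPoch q (m + r)) := by
  intro m
  induction m with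
  | zero =>
    intro r
    simp [S, qPoch]
  | succ M IH =>
    intro r
    have hA : S q M r = ∑ a ∈ Finset.range (M + 2),
        (1 - q ^ (M + 1 - a)) * (q ^ (a * (a + r)) /
          (qPoch q a * qPoch q (a + r) * qPoch q (M + 1 - a))) := by
      rw [Finset.sum_range_succ]
      have h0 : M + 1 - (M + 1) = 0 := by omega
      rw [h0]
      simp only [pow_zero, sub_self, zero_mul, add_zero]
      simp only [S]
      apply Finset.sum_congr rfl
      intro a ha
      have haM : a ≤ M := by simpa [Nat.lt_succ_iff] using ha
      have h1 : M + 1 - a = (M - a) + 1 := by omega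
      rw [h1, qPoch_succ]
      have hne1 : qPoch q a ≠ 0 := qPoch_ne hq a
      have hne2 : qPoch q (a + r) ≠ 0 := qPoch_ne hq (a + r)
      have hne3 : qPoch q (M - a) ≠ 0 := qPoch_ne hq (M - a)
      have hne4 : (1 : ℝ) - q ^ (M - a + 1) ≠ 0 :=
        ne_of_gt (one_sub_pow_pos hq _ (Nat.succ_ne_zero _))
      field_simp
    have hB : S q (M + 1) r - S q M r = ∑ a ∈ Finset.range (M + 2),
        q ^ (M + 1 - a) * (q ^ (a * (a + r)) /
          (qPoch q a * qPoch q (a + r) * qPoch q (M + 1 - a))) := by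
      rw [hA]
      simp only [S]
      rw [← Finset.sum_sub_distrib]
      apply Finset.sum_congr rfl
      intro a _
      ring
    have hC : ∑ a ∈ Finset.range (M + 2),
        q ^ (M + 1 - a) * (q ^ (a * (a + r)) /
          (qPoch q a * qPoch q (a + r) * qPoch q (M + 1 - a)))
        = q ^ (M + 1 + r) * S q M (r + 1) + q ^ (M + 1) * S q (M + 1) r := by
      have hsplit : ∀ a ∈ Finset.range (M + 2),
          q ^ (M + 1 - a) * (q ^ (a * (a + r)) /
            (qPoch q a * qPoch q (a + r) * qPoch q (M + 1 - a)))
          = (1 - q ^ a) * q ^ (M + 1 - a) * q ^ (a * (a + r)) /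
              (qPoch q a * qPoch q (a + r) * qPoch q (M + 1 - a))
            + q ^ (M + 1) * (q ^ (a * (a + r)) /
              (qPoch q a * qPoch q (a + r) * qPoch q (M + 1 - a))) := by
        intro a ha
        have haM : a ≤ M + 1 := by simpa [Nat.lt_succ_iff] using ha
        have hq1 : q ^ (M + 1 - a) * q ^ a = q ^ (M + 1) := by
          rw [← pow_add]; congr 1; omega
        rw [← hq1]; ring
      rw [Finset.sum_congr rfl hsplit, Finset.sum_add_distrib]
      congr 1
      · -- first piece = q^(M+1+r) * S q M (r+1)
        rw [Finset.sum_range_succ']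
        simp only [pow_zero, sub_self, zero_mul, zero_div, add_zero]
        simp only [S]
        rw [Finset.mul_sum]
        apply Finset.sum_congr rfl
        intro b hb
        have hbM : b ≤ M := by simpa [Nat.lt_succ_iff] using hb
        have e1 : M + 1 - (b + 1) = M - b := by omega
        rw [e1, qPoch_succ]
        obtain ⟨d, rfl⟩ : ∃ d, M = b + d := ⟨M - b, by omega⟩
        have e2 : b + d - b = d := by omega
        rw [e2]
        have e3 : q ^ ((b + 1) * (b + 1 + r)) = q ^ (b * (b + (r + 1))) * q ^ (b + r + 1) := by
          rw [← pow_add]; congr 1; ring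
        have e4 : q ^ (b + d + 1 + r) = q ^ d * q ^ (b + r + 1) := by
          rw [← pow_add]; congr 1; ring
        rw [e3, e4]
        have e5 : b + (r + 1) = b + 1 + r := by omega
        rw [e5]
        have hne1 : qPoch q b ≠ 0 := qPoch_ne hq b
        have hne2 : qPoch q (b + 1 + r) ≠ 0 := qPoch_ne hq (b + 1 + r)
        have hne3 : qPoch q d ≠ 0 := qPoch_ne hq d
        have hne4 : (1 : ℝ) - q ^ (b + 1) ≠ 0 :=
          ne_of_gt (one_sub_pow_pos hq _ (Nat.succ_ne_zero _))
        field_simp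
      · simp only [S]
        rw [← Finset.mul_sum]
    have hkey : (1 - q ^ (M + 1)) * S q (M + 1) r
        = 1 / (qPoch q M * qPoch q (M + r))
          + q ^ (M + 1 + r) * (1 / (qPoch q M * qPoch q (M + (r + 1)))) := by
      have h1 := hB.trans hC
      rw [IH r, IH (r + 1)] at h1
      linarith
    have hne0 : (1 : ℝ) - q ^ (M + 1) ≠ 0 :=
      ne_of_gt (one_sub_pow_pos hq _ (Nat.succ_ne_zero _))
    have hgoal : (1 - q ^ (M + 1)) * S q (M + 1) r
        = (1 - q ^ (M + 1)) * (1 / (qPoch q (M + 1) * qPoch q (M + 1 + r))) := by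
      rw [hkey]
      have e2 : M + (r + 1) = (M + r) + 1 := by omega
      have e1 : M + 1 + r = (M + r) + 1 := by omega
      rw [e2, e1, qPoch_succ, qPoch_succ q M]
      have hne1 : qPoch q M ≠ 0 := qPoch_ne hq M
      have hne2 : qPoch q (M + r) ≠ 0 := qPoch_ne hq (M + r)
      have hne3 : (1 : ℝ) - q ^ (M + r + 1) ≠ 0 :=
        ne_of_gt (one_sub_pow_pos hq _ (Nat.succ_ne_zero _))
      field_simp
      ring
    exact mul_left_cancel₀ hne0 hgoal



/-- The diamond identity. -/
lemma diamond {q : ℝ} (hq : |q| < 1) (M : ℕ) :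
    ∑ i₁ ∈ Finset.range (M + 1), ∑ i₂ ∈ Finset.range (M + 1 - i₁),
      q ^ (i₁ * i₁ + i₂ * (i₂ + i₁)) /
        (qPoch q i₁ * qPoch q i₁ * qPoch q i₂ * qPoch q (i₁ + i₂) * qPoch q (M - (i₁ + i₂)))
    = 1 / (qPoch q M) ^ 3 := by
  have hinner : ∀ i₁ ∈ Finset.range (M + 1),
      ∑ i₂ ∈ Finset.range (M + 1 - i₁),
        q ^ (i₁ * i₁ + i₂ * (i₂ + i₁)) /
          (qPoch q i₁ * qPoch q i₁ * qPoch q i₂ * qPoch q (i₁ + i₂) * qPoch q (M - (i₁ + i₂)))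
      = q ^ (i₁ * i₁) / (qPoch q i₁ * qPoch q i₁) * (1 / (qPoch q (M - i₁) * qPoch q M)) := by
    intro i₁ h₁
    have hi₁ : i₁ ≤ M := by simpa [Nat.lt_succ_iff] using h₁
    have hrange : M + 1 - i₁ = (M - i₁) + 1 := by omega
    have step : ∑ i₂ ∈ Finset.range (M + 1 - i₁),
        q ^ (i₁ * i₁ + i₂ * (i₂ + i₁)) /
          (qPoch q i₁ * qPoch q i₁ * qPoch q i₂ * qPoch q (i₁ + i₂) * qPoch q (M - (i₁ + i₂)))
        = q ^ (i₁ * i₁) / (qPoch q i₁ * qPoch q i₁) * S q (M - i₁) i₁ := by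
      rw [hrange]
      simp only [S]
      rw [Finset.mul_sum]
      apply Finset.sum_congr rfl
      intro i₂ h₂
      have hi₂ : i₂ ≤ M - i₁ := by simpa [Nat.lt_succ_iff] using h₂
      have e1 : M - (i₁ + i₂) = (M - i₁) - i₂ := by omega
      have e2 : i₁ + i₂ = i₂ + i₁ := by omega
      have e3 : q ^ (i₁ * i₁ + i₂ * (i₂ + i₁)) = q ^ (i₁ * i₁) * q ^ (i₂ * (i₂ + i₁)) := by
        rw [← pow_add]
      rw [e1, e2, e3]
      ring
    rw [step, S_eq hq]
    have e4 : M - i₁ + i₁ = M := by omega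
    rw [e4]
  rw [Finset.sum_congr rfl hinner]
  have houter : ∑ i₁ ∈ Finset.range (M + 1),
      q ^ (i₁ * i₁) / (qPoch q i₁ * qPoch q i₁) * (1 / (qPoch q (M - i₁) * qPoch q M))
      = (1 / qPoch q M) * S q M 0 := by
    simp only [S]
    rw [Finset.mul_sum]
    apply Finset.sum_congr rfl
    intro a _
    ring_nf
  rw [houter, S_eq hq]
  have hne : qPoch q M ≠ 0 := qPoch_ne hq M
  norm_num
  field_simp

/-- The finite main identity. -/
lemma main_fin {q : ℝ} (hq : |q| < 1) : ∀ M : ℕ,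
    ∑ i ∈ Finset.range (M + 1), q ^ i / (qPoch q i) ^ 3
    = ∑ i₁ ∈ Finset.range (M + 1), ∑ i₂ ∈ Finset.range (M + 1 - i₁),
        q ^ (i₁ + i₁ ^ 2 + i₂ + i₂ ^ 2 + i₁ * i₂) /
          (qPoch q i₁ * qPoch q i₂ * qPoch q i₁ * qPoch q (i₁ + i₂) * qPoch q (M - (i₁ + i₂))) := by
  intro M
  induction M with
  | zero => simp [qPoch]
  | succ M IH =>
    -- notation: T a b := big term at level M+1
    have hA : ∑ i₁ ∈ Finset.range (M + 1), ∑ i₂ ∈ Finset.range (M + 1 - i₁),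
          q ^ (i₁ + i₁ ^ 2 + i₂ + i₂ ^ 2 + i₁ * i₂) /
            (qPoch q i₁ * qPoch q i₂ * qPoch q i₁ * qPoch q (i₁ + i₂) * qPoch q (M - (i₁ + i₂)))
        = ∑ i₁ ∈ Finset.range (M + 2), ∑ i₂ ∈ Finset.range (M + 2 - i₁),
            (1 - q ^ (M + 1 - (i₁ + i₂))) *
              (q ^ (i₁ + i₁ ^ 2 + i₂ + i₂ ^ 2 + i₁ * i₂) /
                (qPoch q i₁ * qPoch q i₂ * qPoch q i₁ * qPoch q (i₁ + i₂) *
                  qPoch q (M + 1 - (i₁ + i₂)))) := by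
      rw [Finset.sum_range_succ (n := M + 1)]
      have hlast : ∑ i₂ ∈ Finset.range (M + 2 - (M + 1)),
          (1 - q ^ (M + 1 - (M + 1 + i₂))) *
            (q ^ (M + 1 + (M+1) ^ 2 + i₂ + i₂ ^ 2 + (M+1) * i₂) /
              (qPoch q (M+1) * qPoch q i₂ * qPoch q (M+1) * qPoch q (M + 1 + i₂) *
                qPoch q (M + 1 - (M + 1 + i₂)))) = 0 := by
        have : M + 2 - (M + 1) = 1 := by omega
        rw [this, Finset.sum_range_one]
        have h0 : M + 1 - (M + 1 + 0) = 0 := by omega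
        rw [h0]
        simp
      rw [hlast, add_zero]
      apply Finset.sum_congr rfl
      intro i₁ h₁
      have hi₁ : i₁ ≤ M := by simpa [Nat.lt_succ_iff] using h₁
      have hrange : M + 2 - i₁ = (M + 1 - i₁) + 1 := by omega
      rw [hrange, Finset.sum_range_succ]
      have hz : M + 1 - (i₁ + (M + 1 - i₁)) = 0 := by omega
      rw [hz]
      simp only [pow_zero, sub_self, zero_mul, add_zero]
      apply Finset.sum_congr rfl
      intro i₂ h₂
      have hi₂ : i₁ + i₂ ≤ M := by
        have := Finset.mem_range.mp h₂; omega
      have e1 : M + 1 - (i₁ + i₂) = (M - (i₁ + i₂)) + 1 := by omega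
      rw [e1, qPoch_succ]
      have hne1 : qPoch q i₁ ≠ 0 := qPoch_ne hq i₁
      have hne2 : qPoch q i₂ ≠ 0 := qPoch_ne hq i₂
      have hne3 : qPoch q (i₁ + i₂) ≠ 0 := qPoch_ne hq (i₁ + i₂)
      have hne4 : qPoch q (M - (i₁ + i₂)) ≠ 0 := qPoch_ne hq (M - (i₁ + i₂))
      have hne5 : (1 : ℝ) - q ^ (M - (i₁ + i₂) + 1) ≠ 0 :=
        ne_of_gt (one_sub_pow_pos hq _ (Nat.succ_ne_zero _))
      field_simp
    have hB : (∑ i₁ ∈ Finset.range (M + 2), ∑ i₂ ∈ Finset.range (M + 2 - i₁),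
          q ^ (i₁ + i₁ ^ 2 + i₂ + i₂ ^ 2 + i₁ * i₂) /
            (qPoch q i₁ * qPoch q i₂ * qPoch q i₁ * qPoch q (i₁ + i₂) *
              qPoch q (M + 1 - (i₁ + i₂))))
        - (∑ i₁ ∈ Finset.range (M + 1), ∑ i₂ ∈ Finset.range (M + 1 - i₁),
            q ^ (i₁ + i₁ ^ 2 + i₂ + i₂ ^ 2 + i₁ * i₂) /
              (qPoch q i₁ * qPoch q i₂ * qPoch q i₁ * qPoch q (i₁ + i₂) *
                qPoch q (M - (i₁ + i₂))))
        = ∑ i₁ ∈ Finset.range (M + 2), ∑ i₂ ∈ Finset.range (M + 2 - i₁),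
            q ^ (M + 1 - (i₁ + i₂)) *
              (q ^ (i₁ + i₁ ^ 2 + i₂ + i₂ ^ 2 + i₁ * i₂) /
                (qPoch q i₁ * qPoch q i₂ * qPoch q i₁ * qPoch q (i₁ + i₂) *
                  qPoch q (M + 1 - (i₁ + i₂)))) := by
      rw [hA, ← Finset.sum_sub_distrib]
      apply Finset.sum_congr rfl
      intro i₁ _
      rw [← Finset.sum_sub_distrib]
      apply Finset.sum_congr rfl
      intro i₂ _
      ring
    have hC : ∑ i₁ ∈ Finset.range (M + 2), ∑ i₂ ∈ Finset.range (M + 2 - i₁),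
          q ^ (M + 1 - (i₁ + i₂)) *
            (q ^ (i₁ + i₁ ^ 2 + i₂ + i₂ ^ 2 + i₁ * i₂) /
              (qPoch q i₁ * qPoch q i₂ * qPoch q i₁ * qPoch q (i₁ + i₂) *
                qPoch q (M + 1 - (i₁ + i₂))))
        = q ^ (M + 1) * (1 / (qPoch q (M + 1)) ^ 3) := by
      rw [← diamond hq (M + 1)]
      rw [Finset.mul_sum]
      apply Finset.sum_congr rfl
      intro i₁ h₁
      rw [Finset.mul_sum]
      have hrange : M + 1 + 1 - i₁ = M + 2 - i₁ := by omega
      rw [hrange]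
      apply Finset.sum_congr rfl
      intro i₂ h₂
      have hi₂ : i₁ + i₂ ≤ M + 1 := by
        have := Finset.mem_range.mp h₂
        have := Finset.mem_range.mp h₁
        omega
      have eexp : q ^ (M + 1 - (i₁ + i₂)) * q ^ (i₁ + i₁ ^ 2 + i₂ + i₂ ^ 2 + i₁ * i₂)
          = q ^ (M + 1) * q ^ (i₁ * i₁ + i₂ * (i₂ + i₁)) := by
        rw [← pow_add, ← pow_add]
        congr 1
        obtain ⟨d, hd⟩ : ∃ d, M + 1 = (i₁ + i₂) + d := ⟨M + 1 - (i₁ + i₂), by omega⟩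
        rw [hd]
        have : i₁ + i₂ + d - (i₁ + i₂) = d := by omega
        rw [this]
        ring
      calc q ^ (M + 1 - (i₁ + i₂)) *
            (q ^ (i₁ + i₁ ^ 2 + i₂ + i₂ ^ 2 + i₁ * i₂) /
              (qPoch q i₁ * qPoch q i₂ * qPoch q i₁ * qPoch q (i₁ + i₂) *
                qPoch q (M + 1 - (i₁ + i₂))))
          = (q ^ (M + 1 - (i₁ + i₂)) * q ^ (i₁ + i₁ ^ 2 + i₂ + i₂ ^ 2 + i₁ * i₂)) /
              (qPoch q i₁ * qPoch q i₂ * qPoch q i₁ * qPoch q (i₁ + i₂) *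
                qPoch q (M + 1 - (i₁ + i₂))) := by ring
        _ = (q ^ (M + 1) * q ^ (i₁ * i₁ + i₂ * (i₂ + i₁))) /
              (qPoch q i₁ * qPoch q i₂ * qPoch q i₁ * qPoch q (i₁ + i₂) *
                qPoch q (M + 1 - (i₁ + i₂))) := by rw [eexp]
        _ = q ^ (M + 1) * (q ^ (i₁ * i₁ + i₂ * (i₂ + i₁)) /
              (qPoch q i₁ * qPoch q i₁ * qPoch q i₂ * qPoch q (i₁ + i₂) *
                qPoch q (M + 1 - (i₁ + i₂)))) := by ring
    -- assemble
    have hstep := hB.trans hC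
    show ∑ i ∈ Finset.range (M + 2), q ^ i / (qPoch q i) ^ 3
        = ∑ i₁ ∈ Finset.range (M + 2), ∑ i₂ ∈ Finset.range (M + 2 - i₁),
            q ^ (i₁ + i₁ ^ 2 + i₂ + i₂ ^ 2 + i₁ * i₂) /
              (qPoch q i₁ * qPoch q i₂ * qPoch q i₁ * qPoch q (i₁ + i₂) *
                qPoch q (M + 1 - (i₁ + i₂)))
    rw [Finset.sum_range_succ (n := M + 1), IH]
    have hgoal : ∑ i₁ ∈ Finset.range (M + 2), ∑ i₂ ∈ Finset.range (M + 2 - i₁),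
          q ^ (i₁ + i₁ ^ 2 + i₂ + i₂ ^ 2 + i₁ * i₂) /
            (qPoch q i₁ * qPoch q i₂ * qPoch q i₁ * qPoch q (i₁ + i₂) *
              qPoch q (M + 1 - (i₁ + i₂)))
        = (∑ i₁ ∈ Finset.range (M + 1), ∑ i₂ ∈ Finset.range (M + 1 - i₁),
            q ^ (i₁ + i₁ ^ 2 + i₂ + i₂ ^ 2 + i₁ * i₂) /
              (qPoch q i₁ * qPoch q i₂ * qPoch q i₁ * qPoch q (i₁ + i₂) *
                qPoch q (M - (i₁ + i₂))))
          + q ^ (M + 1) * (1 / (qPoch q (M + 1)) ^ 3) := by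
      linarith [hstep]
    rw [hgoal]
    congr 1
    ring


lemma prod_one_sub_ge (d : ℕ) (x : ℕ → ℝ) (h0 : ∀ j, 0 ≤ x j) (h1 : ∀ j, x j ≤ 1) :
    1 - ∑ j ∈ Finset.range d, x j ≤ ∏ j ∈ Finset.range d, (1 - x j) := by
  induction d with
  | zero => simp
  | succ n IH =>
    rw [Finset.prod_range_succ, Finset.sum_range_succ]
    have hS : 0 ≤ ∑ j ∈ Finset.range n, x j :=
      Finset.sum_nonneg fun j _ => h0 j
    have hx0 := h0 n
    have hx1 := h1 n
    nlinarith [mul_le_mul_of_nonneg_right IH (by linarith : (0:ℝ) ≤ 1 - x n)]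

lemma qPoch_le_qPoch {q : ℝ} (hq : |q| < 1) (n : ℕ) : qPoch |q| n ≤ qPoch q n := by
  have habs : |(|q|)| < 1 := by rwa [abs_abs]
  apply Finset.prod_le_prod
  · intro j _
    have := one_sub_pow_pos habs (j + 1) (Nat.succ_ne_zero j)
    linarith
  · intro j _
    have h : q ^ (j + 1) ≤ |q| ^ (j + 1) := by
      calc q ^ (j + 1) ≤ |q ^ (j + 1)| := le_abs_self _
        _ = |q| ^ (j + 1) := abs_pow q (j + 1)
    linarith

lemma qPoch_abs_antitone {q : ℝ} (hq : |q| < 1) {m n : ℕ} (h : m ≤ n) :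
    qPoch |q| n ≤ qPoch |q| m := by
  have habs : |(|q|)| < 1 := by rwa [abs_abs]
  obtain ⟨d, rfl⟩ := Nat.exists_eq_add_of_le h
  rw [qPoch, Finset.prod_range_add]
  have h2 : ∏ x ∈ Finset.range d, (1 - |q| ^ (m + x + 1)) ≤ 1 := by
    apply Finset.prod_le_one
    · intro j _
      have := one_sub_pow_pos habs (m + j + 1) (Nat.succ_ne_zero _)
      linarith
    · intro j _
      have : (0:ℝ) ≤ |q| ^ (m + j + 1) := by positivity
      linarith
  calc (∏ j ∈ Finset.range m, (1 - |q| ^ (j + 1))) * ∏ x ∈ Finset.range d, (1 - |q| ^ (m + x + 1))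
      ≤ (∏ j ∈ Finset.range m, (1 - |q| ^ (j + 1))) * 1 := by
        apply mul_le_mul_of_nonneg_left h2 (le_of_lt (qPoch_pos habs m))
    _ = qPoch |q| m := by rw [mul_one]; rfl

lemma qPoch_lb {q : ℝ} (hq : |q| < 1) : ∃ c : ℝ, 0 < c ∧ ∀ n, c ≤ qPoch q n := by
  have habs : |(|q|)| < 1 := by rwa [abs_abs]
  have ht0 : (0:ℝ) ≤ |q| := abs_nonneg q
  have ht1 : |q| < 1 := hq
  have hsum : Summable (fun j : ℕ => |q| ^ (j + 1)) := by
    apply Summable.congr ((summable_geometric_of_lt_one ht0 ht1).mul_left |q|)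
    intro j
    rw [pow_succ]
    ring
  have htail := tendsto_sum_nat_add (fun j : ℕ => |q| ^ (j + 1))
  have hev : ∀ᶠ i in Filter.atTop, (∑' k : ℕ, |q| ^ ((k + i) + 1)) < 1 / 2 :=
    htail.eventually_lt_const (by norm_num)
  obtain ⟨n₀, hn₀⟩ := Filter.eventually_atTop.mp hev
  have htail₀ : (∑' k : ℕ, |q| ^ ((k + n₀) + 1)) < 1 / 2 := hn₀ n₀ le_rfl
  refine ⟨qPoch |q| n₀ / 2, div_pos (qPoch_pos habs n₀) two_pos, ?_⟩
  intro n
  refine le_trans ?_ (qPoch_le_qPoch hq n)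
  rcases le_total n n₀ with h | h
  · have := qPoch_abs_antitone hq h
    have := qPoch_pos habs n₀
    linarith
  · obtain ⟨d, rfl⟩ := Nat.exists_eq_add_of_le h
    have hsplit : qPoch |q| (n₀ + d)
        = qPoch |q| n₀ * ∏ x ∈ Finset.range d, (1 - |q| ^ ((n₀ + x) + 1)) := by
      have := Finset.prod_range_add (fun j => 1 - |q| ^ (j + 1)) n₀ d
      simpa [qPoch] using this
    rw [hsplit]
    have hsum' : Summable (fun k : ℕ => |q| ^ ((k + n₀) + 1)) := by
      have := (summable_nat_add_iff (f := fun j : ℕ => |q| ^ (j + 1)) n₀).mpr hsum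
      exact this
    have hfin : ∑ x ∈ Finset.range d, |q| ^ ((n₀ + x) + 1) ≤ 1 / 2 := by
      have hle : ∑ x ∈ Finset.range d, |q| ^ ((n₀ + x) + 1)
          = ∑ x ∈ Finset.range d, |q| ^ ((x + n₀) + 1) := by
        apply Finset.sum_congr rfl
        intro x _
        congr 2
        omega
      rw [hle]
      calc ∑ x ∈ Finset.range d, |q| ^ ((x + n₀) + 1)
          ≤ ∑' k : ℕ, |q| ^ ((k + n₀) + 1) :=
            Summable.sum_le_tsum _ (fun i _ => by positivity) hsum'
        _ ≤ 1 / 2 := le_of_lt htail₀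
    have hprodge : (1:ℝ) - ∑ x ∈ Finset.range d, |q| ^ ((n₀ + x) + 1)
        ≤ ∏ x ∈ Finset.range d, (1 - |q| ^ ((n₀ + x) + 1)) := by
      apply prod_one_sub_ge
      · intro j; positivity
      · intro j
        have : (0:ℝ) ≤ |q| ^ ((n₀ + j) + 1) := by positivity
        have hle1 : |q| ^ ((n₀ + j) + 1) ≤ 1 :=
          pow_le_one₀ ht0 (le_of_lt ht1)
        linarith
    have h12 : (1:ℝ)/2 ≤ ∏ x ∈ Finset.range d, (1 - |q| ^ ((n₀ + x) + 1)) := by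
      linarith
    have hpos := qPoch_pos habs n₀
    calc qPoch |q| n₀ / 2 = qPoch |q| n₀ * (1/2) := by ring
      _ ≤ qPoch |q| n₀ *
            ∏ x ∈ Finset.range d, (1 - |q| ^ ((n₀ + x) + 1)) := by
          apply mul_le_mul_of_nonneg_left h12 (le_of_lt hpos)

lemma summable_B {t : ℝ} (ht0 : 0 ≤ t) (ht1 : t < 1) :
    Summable (fun n : ℕ => (2:ℝ) ^ n * t ^ (n * n + n)) := by
  obtain ⟨k, hk⟩ : ∃ k, t ^ (k + 1) ≤ 1 / 4 := by
    have h := (tendsto_pow_atTop_nhds_zero_of_lt_one ht0 ht1).eventually_lt_const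
      (by norm_num : (0:ℝ) < 1/4)
    obtain ⟨N, hN⟩ := Filter.eventually_atTop.mp h
    exact ⟨N, le_of_lt (hN (N + 1) (by omega))⟩
  rw [← summable_nat_add_iff k]
  apply Summable.of_nonneg_of_le (fun n => by positivity) (fun n => ?_)
    (summable_geometric_of_lt_one (by norm_num) (by norm_num : (1/2:ℝ) < 1))
  have e : (n + k) * (n + k) + (n + k) = ((n + k) + 1) * (n + k) := by ring
  have h1 : t ^ ((n + k) * (n + k) + (n + k)) = (t ^ ((n + k) + 1)) ^ (n + k) := by
    rw [e, pow_mul]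
  have h2 : t ^ ((n + k) + 1) ≤ 1 / 4 :=
    le_trans (pow_le_pow_of_le_one ht0 (le_of_lt ht1) (by omega)) hk
  calc (2:ℝ) ^ (n + k) * t ^ ((n + k) * (n + k) + (n + k))
      = 2 ^ (n + k) * (t ^ ((n + k) + 1)) ^ (n + k) := by rw [h1]
    _ ≤ 2 ^ (n + k) * (1/4) ^ (n + k) := by
        apply mul_le_mul_of_nonneg_left (pow_le_pow_left₀ (by positivity) h2 (n + k))
          (by positivity)
    _ = (1/2:ℝ) ^ (n + k) := by
        rw [← mul_pow]; norm_num
    _ ≤ (1/2:ℝ) ^ n := pow_le_pow_of_le_one (by norm_num) (by norm_num) (by omega)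

lemma qPoch_ratio {q : ℝ} (hq : |q| < 1) (M s : ℕ) (h : s ≤ M) :
    qPoch q M / qPoch q (M - s) = ∏ j ∈ Finset.range s, (1 - q ^ ((M - s) + j + 1)) := by
  obtain ⟨d, rfl⟩ : ∃ d, M = d + s := ⟨M - s, by omega⟩
  have hd : d + s - s = d := by omega
  rw [hd, qPoch, qPoch, Finset.prod_range_add]
  rw [mul_div_cancel_left₀ _ (by exact qPoch_ne hq d)]

lemma ratio_abs_le {q : ℝ} (hq : |q| < 1) (M s : ℕ) (h : s ≤ M) :
    |qPoch q M / qPoch q (M - s)| ≤ 2 ^ s := by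
  rw [qPoch_ratio hq M s h, Finset.abs_prod]
  calc ∏ j ∈ Finset.range s, |1 - q ^ ((M - s) + j + 1)|
      ≤ ∏ j ∈ Finset.range s, (2:ℝ) := by
        apply Finset.prod_le_prod (fun j _ => abs_nonneg _)
        intro j _
        have h1 : |q ^ ((M - s) + j + 1)| ≤ 1 := by
          rw [abs_pow]
          exact pow_le_one₀ (abs_nonneg q) (le_of_lt hq)
        calc |1 - q ^ ((M - s) + j + 1)| ≤ |(1:ℝ)| + |q ^ ((M - s) + j + 1)| := abs_sub _ _
          _ ≤ 1 + 1 := by rw [abs_one]; linarith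
          _ = 2 := by norm_num
    _ = 2 ^ s := by rw [Finset.prod_const, Finset.card_range]

end PretzelAux

open PretzelAux Filter Finset Topology in
theorem pretzel_identity_k_two (q : ℝ) (hq : |q| < 1) :
    (∏' j : ℕ, (1 - q ^ (j + 1))) * ∑' i : ℕ, q ^ i / (qPoch q i) ^ 3
      = ∑' i₁ : ℕ, ∑' i₂ : ℕ,
          q ^ (i₁ + i₁ ^ 2 + i₂ + i₂ ^ 2 + i₁ * i₂) /
            (qPoch q i₁ * qPoch q i₂ * qPoch q i₁ * qPoch q (i₁ + i₂)) := by
  classical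
  obtain ⟨c, hc, hcle⟩ := qPoch_lb hq
  have ht0 : (0:ℝ) ≤ |q| := abs_nonneg q
  have ht1 : |q| < 1 := hq
  -- the summand of the double series
  set F : ℕ × ℕ → ℝ := fun p =>
    q ^ (p.1 + p.1 ^ 2 + p.2 + p.2 ^ 2 + p.1 * p.2) /
      (qPoch q p.1 * qPoch q p.2 * qPoch q p.1 * qPoch q (p.1 + p.2)) with hF
  set B : ℕ → ℝ := fun n => (2:ℝ) ^ n * |q| ^ (n * n + n) with hB
  have hBsum : Summable B := summable_B ht0 ht1
  have hBnn : 0 ≤ B := fun n => by simp only [hB]; positivity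
  have hbound_sum : Summable (fun p : ℕ × ℕ => (B p.1 * B p.2) / c ^ 4) :=
    (hBsum.mul_of_nonneg hBsum hBnn hBnn).div_const _
  have hc4 : (0:ℝ) < c ^ 4 := by positivity
  -- denominator lower bound
  have hDge : ∀ p : ℕ × ℕ,
      c ^ 4 ≤ qPoch q p.1 * qPoch q p.2 * qPoch q p.1 * qPoch q (p.1 + p.2) := by
    intro p
    have h1 := hcle p.1
    have h2 := hcle p.2
    have h3 := hcle (p.1 + p.2)
    have hcc : (0:ℝ) ≤ c := le_of_lt hc
    have hp1 : (0:ℝ) ≤ qPoch q p.1 := le_trans hcc h1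
    have hp2 : (0:ℝ) ≤ qPoch q p.2 := le_trans hcc h2
    calc c ^ 4 = ((c * c) * c) * c := by ring
      _ ≤ qPoch q p.1 * qPoch q p.2 * qPoch q p.1 * qPoch q (p.1 + p.2) := by
          apply mul_le_mul _ h3 hcc (by positivity)
          apply mul_le_mul _ h1 hcc (by positivity)
          exact mul_le_mul h1 h2 hcc hp1
  -- |F p| ≤ t^{e1} t^{e2} / c^4
  have hFabs : ∀ p : ℕ × ℕ,
      |F p| ≤ (|q| ^ (p.1 * p.1 + p.1) * |q| ^ (p.2 * p.2 + p.2)) / c ^ 4 := by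
    intro p
    have hDpos : (0:ℝ) < qPoch q p.1 * qPoch q p.2 * qPoch q p.1 * qPoch q (p.1 + p.2) := by
      have := qPoch_pos hq p.1; have := qPoch_pos hq p.2; have := qPoch_pos hq (p.1 + p.2)
      positivity
    have habsF : |F p| = |q| ^ (p.1 + p.1 ^ 2 + p.2 + p.2 ^ 2 + p.1 * p.2) /
        (qPoch q p.1 * qPoch q p.2 * qPoch q p.1 * qPoch q (p.1 + p.2)) := by
      simp only [hF]
      rw [abs_div, abs_pow, abs_of_pos hDpos]
    rw [habsF]
    have hexp : |q| ^ (p.1 + p.1 ^ 2 + p.2 + p.2 ^ 2 + p.1 * p.2)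
        ≤ |q| ^ (p.1 * p.1 + p.1) * |q| ^ (p.2 * p.2 + p.2) := by
      rw [← pow_add]
      apply pow_le_pow_of_le_one ht0 (le_of_lt ht1)
      have : p.1 + p.1 ^ 2 + p.2 + p.2 ^ 2 + p.1 * p.2
          = (p.1 * p.1 + p.1 + (p.2 * p.2 + p.2)) + p.1 * p.2 := by ring
      omega
    exact div_le_div₀ (by positivity) hexp hc4 (hDge p)
  -- the truncated-and-corrected family
  set g : ℕ → ℕ × ℕ → ℝ := fun M p =>
    if p.1 + p.2 ≤ M then F p * (qPoch q M / qPoch q (M - (p.1 + p.2))) else 0 with hg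
  have hgbd : ∀ M : ℕ, ∀ p : ℕ × ℕ, ‖g M p‖ ≤ (B p.1 * B p.2) / c ^ 4 := by
    intro M p
    simp only [hg, Real.norm_eq_abs]
    by_cases hs : p.1 + p.2 ≤ M
    · rw [if_pos hs, abs_mul]
      calc |F p| * |qPoch q M / qPoch q (M - (p.1 + p.2))|
          ≤ ((|q| ^ (p.1 * p.1 + p.1) * |q| ^ (p.2 * p.2 + p.2)) / c ^ 4) * 2 ^ (p.1 + p.2) := by
            apply mul_le_mul (hFabs p) (ratio_abs_le hq M _ hs) (abs_nonneg _) (by positivity)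
        _ = (B p.1 * B p.2) / c ^ 4 := by
            simp only [hB, pow_add]
            ring
    · rw [if_neg hs, abs_zero]
      have : (0:ℝ) ≤ B p.1 * B p.2 := mul_nonneg (hBnn p.1) (hBnn p.2)
      positivity
  have hFsum : Summable F := by
    apply Summable.of_norm_bounded hbound_sum
    intro p
    rw [Real.norm_eq_abs]
    refine le_trans (hFabs p) ?_
    apply div_le_div₀ (by positivity) ?_ hc4 le_rfl
    have h1 : |q| ^ (p.1 * p.1 + p.1) ≤ B p.1 := by
      simp only [hB]
      apply le_mul_of_one_le_left (by positivity)
      exact one_le_pow₀ (by norm_num)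
    have h2 : |q| ^ (p.2 * p.2 + p.2) ≤ B p.2 := by
      simp only [hB]
      apply le_mul_of_one_le_left (by positivity)
      exact one_le_pow₀ (by norm_num)
    exact mul_le_mul h1 h2 (by positivity) (le_trans (by positivity) h1)
  -- multipliability of the infinite product
  have hlog : Summable (fun n : ℕ => Real.log (1 - q ^ (n + 1))) := by
    apply Summable.of_norm_bounded (g := fun n : ℕ => |q| ^ (n + 1) / (1 - |q|))
    · apply Summable.div_const
      apply Summable.congr ((summable_geometric_of_lt_one ht0 ht1).mul_left |q|)
      intro j
      rw [pow_succ]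
      ring
    · intro n
      have hxlt : |q ^ (n + 1)| < 1 := by
        rw [abs_pow]; exact pow_lt_one₀ ht0 ht1 (Nat.succ_ne_zero n)
      have hbd := Real.abs_log_sub_add_sum_range_le hxlt 0
      simp only [Finset.range_zero, Finset.sum_empty, zero_add, pow_one] at hbd
      rw [Real.norm_eq_abs]
      refine le_trans hbd ?_
      rw [abs_pow]
      have hle : |q| ^ (n + 1) ≤ |q| := by
        calc |q| ^ (n + 1) ≤ |q| ^ 1 := pow_le_pow_of_le_one ht0 (le_of_lt ht1) (by omega)
          _ = |q| := pow_one _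
      have hpos : (0:ℝ) < 1 - |q| := by linarith
      apply div_le_div_of_nonneg_left (by positivity) hpos (by linarith)
  have hmulm : Multipliable (fun n : ℕ => 1 - q ^ (n + 1)) :=
    Real.multipliable_of_summable_log
      (fun n => one_sub_pow_pos hq (n + 1) (Nat.succ_ne_zero n)) hlog
  have hprod : Tendsto (fun M => qPoch q M) atTop (𝓝 (∏' j : ℕ, (1 - q ^ (j + 1)))) :=
    hmulm.hasProd.tendsto_prod_nat
  have hPr : c ≤ ∏' j : ℕ, (1 - q ^ (j + 1)) := ge_of_tendsto' hprod hcle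
  have hPrne : (∏' j : ℕ, (1 - q ^ (j + 1))) ≠ 0 := by
    have : (0:ℝ) < ∏' j : ℕ, (1 - q ^ (j + 1)) := lt_of_lt_of_le hc hPr
    exact ne_of_gt this
  -- pointwise convergence
  have hpt : ∀ p : ℕ × ℕ, Tendsto (fun M => g M p) atTop (𝓝 (F p)) := by
    intro p
    have h2 : Tendsto (fun M => qPoch q (M - (p.1 + p.2))) atTop
        (𝓝 (∏' j : ℕ, (1 - q ^ (j + 1)))) :=
      hprod.comp (tendsto_sub_atTop_nat (p.1 + p.2))
    have h3 := (tendsto_const_nhds (x := F p) (f := atTop)).mul (hprod.div h2 hPrne)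
    rw [div_self hPrne, mul_one] at h3
    apply h3.congr'
    filter_upwards [eventually_ge_atTop (p.1 + p.2)] with M hM
    simp only [hg, if_pos hM, Pi.div_apply]
  -- dominated convergence
  have hDC : Tendsto (fun M => ∑' p : ℕ × ℕ, g M p) atTop (𝓝 (∑' p : ℕ × ℕ, F p)) :=
    tendsto_tsum_of_dominated_convergence hbound_sum hpt
      (Eventually.of_forall hgbd)
  -- identify the truncated sums with the finite identity
  have hgsum : ∀ M : ℕ, (∑' p : ℕ × ℕ, g M p)
      = qPoch q M * ∑ i ∈ Finset.range (M + 1), q ^ i / (qPoch q i) ^ 3 := by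
    intro M
    have hvanish : ∀ p : ℕ × ℕ, p ∉ (Finset.range (M + 1) ×ˢ Finset.range (M + 1)) →
        g M p = 0 := by
      intro p hp
      simp only [Finset.mem_product, Finset.mem_range, not_and_or, not_lt] at hp
      simp only [hg]
      rw [if_neg (by omega)]
    rw [tsum_eq_sum hvanish, Finset.sum_product]
    have hinner : ∀ i₁ ∈ Finset.range (M + 1),
        ∑ i₂ ∈ Finset.range (M + 1), g M (i₁, i₂)
        = ∑ i₂ ∈ Finset.range (M + 1 - i₁),
            F (i₁, i₂) * (qPoch q M / qPoch q (M - (i₁ + i₂))) := by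
      intro i₁ h₁
      have hfil : Finset.filter (fun i₂ => i₁ + i₂ ≤ M) (Finset.range (M + 1))
          = Finset.range (M + 1 - i₁) := by
        ext i₂
        simp only [Finset.mem_filter, Finset.mem_range]
        omega
      rw [← hfil, Finset.sum_filter]
    rw [Finset.sum_congr rfl hinner, main_fin hq M, Finset.mul_sum]
    apply Finset.sum_congr rfl
    intro i₁ h₁
    rw [Finset.mul_sum]
    apply Finset.sum_congr rfl
    intro i₂ h₂
    simp only [hF]
    field_simp
  -- the left-hand side limit
  have hfsum : Summable (fun i : ℕ => q ^ i / (qPoch q i) ^ 3) := by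
    apply Summable.of_norm_bounded (g := fun i : ℕ => |q| ^ i / c ^ 3)
      ((summable_geometric_of_lt_one ht0 ht1).div_const _)
    intro i
    rw [Real.norm_eq_abs]
    have hPpos := qPoch_pos hq i
    have habs : |q ^ i / qPoch q i ^ 3| = |q| ^ i / qPoch q i ^ 3 := by
      rw [abs_div, abs_pow, abs_of_pos (pow_pos hPpos 3)]
    rw [habs]
    apply div_le_div₀ (by positivity) le_rfl (by positivity)
    exact pow_le_pow_left₀ (le_of_lt hc) (hcle i) 3
  have hLlim : Tendsto (fun M => qPoch q M * ∑ i ∈ Finset.range (M + 1),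
      q ^ i / (qPoch q i) ^ 3) atTop
      (𝓝 ((∏' j : ℕ, (1 - q ^ (j + 1))) * ∑' i : ℕ, q ^ i / (qPoch q i) ^ 3)) := by
    apply hprod.mul
    exact hfsum.hasSum.tendsto_sum_nat.comp (tendsto_add_atTop_nat 1)
  have hEq : Tendsto (fun M => qPoch q M * ∑ i ∈ Finset.range (M + 1),
      q ^ i / (qPoch q i) ^ 3) atTop (𝓝 (∑' p : ℕ × ℕ, F p)) := by
    apply hDC.congr
    intro M
    exact hgsum M
  have huniq := tendsto_nhds_unique hLlim hEq
  rw [huniq, Summable.tsum_prod' hFsum (fun b => hFsum.prod_factor b)]
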